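/- arXiv:2101.05168 — 2 statements merged into one kernel-verified Lean document; each statement's English description precedes it below -/
import Mathlib

section
/- There exists a constant c > 0 such that for all x, b ∈ [0,∞), all τ ∈ ℝ, and all t ∈ ℝ with t ≠ 0, the kernel ℓ satisfies |ℓ(τ; x, t, b)| ≤ c |t|^{−1/2}. -/
open MeasureTheory Complex

noncomputable def kf (τ x t : ℝ) (k : ℝ) : ℂ :=
  Complex.exp (-(k : ℂ) * (x : ℂ) + Complex.I * ((k : ℂ) ^ 2 * (t : ℂ) - (k : ℂ) * (τ : ℂ)))

noncomputable def Af (x k : ℝ) : ℂ := Complex.exp (-(k:ℂ) * x)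
def Bf (τ t k : ℝ) : ℝ := 2*t*k - τ
noncomputable def vf (τ t k : ℝ) : ℂ := Complex.exp (Complex.I * ((k^2*t - k*τ : ℝ) : ℂ))
noncomputable def uf (τ x t k : ℝ) : ℂ := Af x k / (Complex.I * (Bf τ t k : ℂ))
noncomputable def udf (τ x t k : ℝ) : ℂ :=
  ((-(x:ℂ) * Af x k) * (Complex.I * (Bf τ t k : ℂ)) - Af x k * (Complex.I * (2*t : ℂ)))
    / (Complex.I * (Bf τ t k : ℂ))^2
noncomputable def vdf (τ t k : ℝ) : ℂ := vf τ t k * (Complex.I * (Bf τ t k : ℂ))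

lemma kf_cont (τ x t : ℝ) : Continuous (kf τ x t) := by unfold kf; fun_prop
lemma Af_cont (x : ℝ) : Continuous (Af x) := by unfold Af; fun_prop
lemma Bf_cont (τ t : ℝ) : Continuous (Bf τ t) := by unfold Bf; fun_prop
lemma vf_cont (τ t : ℝ) : Continuous (vf τ t) := by unfold vf; fun_prop
lemma vdf_cont (τ t : ℝ) : Continuous (vdf τ t) := by unfold vdf vf Bf; fun_prop

lemma Af_norm (x k : ℝ) : ‖Af x k‖ = Real.exp (-(k * x)) := by
  rw [Af, Complex.norm_exp]
  congr 1
  simp [Complex.mul_re]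

lemma vf_norm (τ t k : ℝ) : ‖vf τ t k‖ = 1 := by
  rw [vf, Complex.norm_exp]
  simp [Complex.mul_re, ← Complex.ofReal_pow]

lemma IB_norm (r : ℝ) : ‖Complex.I * (r : ℂ)‖ = |r| := by
  simp

lemma kf_eq (τ x t k : ℝ) : Af x k * vf τ t k = kf τ x t k := by
  rw [Af, vf, kf, ← Complex.exp_add]
  congr 1
  push_cast
  ring

lemma Af_hasDeriv (x k : ℝ) : HasDerivAt (Af x) (-(x:ℂ) * Af x k) k := by
  have h1 : HasDerivAt (fun k : ℝ => -(k:ℂ)*x) (-(x:ℂ)) k := by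
    simpa using ((Complex.ofRealCLM.hasDerivAt (x := k)).neg.mul_const (x:ℂ))
  unfold Af
  convert h1.cexp using 1
  ring

lemma Bf_hasDeriv (τ t k : ℝ) : HasDerivAt (Bf τ t) (2*t) k := by
  unfold Bf
  simpa using ((hasDerivAt_id k).const_mul (2*t)).sub_const τ

lemma IB_hasDeriv (τ t k : ℝ) :
    HasDerivAt (fun k : ℝ => Complex.I * (Bf τ t k : ℂ)) (Complex.I * (2*t : ℂ)) k := by
  have := ((Bf_hasDeriv τ t k).ofReal_comp).const_mul Complex.I
  exact this.congr_deriv (by simp)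

lemma vf_hasDeriv (τ t k : ℝ) : HasDerivAt (vf τ t) (vdf τ t k) k := by
  have hg : HasDerivAt (fun k : ℝ => k^2*t - k*τ) (Bf τ t k) k := by
    have := ((hasDerivAt_pow 2 k).mul_const t).sub ((hasDerivAt_id k).mul_const τ)
    exact this.congr_deriv (by rw [Bf]; ring)
  have := (hg.ofReal_comp.const_mul Complex.I).cexp
  unfold vf vdf
  exact this

lemma uf_hasDeriv (τ x t k : ℝ) (hB : Bf τ t k ≠ 0) : HasDerivAt (uf τ x t) (udf τ x t k) k := by
  have hne : Complex.I * (Bf τ t k : ℂ) ≠ 0 :=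
    mul_ne_zero Complex.I_ne_zero (Complex.ofReal_ne_zero.2 hB)
  exact (Af_hasDeriv x k).div (IB_hasDeriv τ t k) hne

lemma uv_eq (τ x t k : ℝ) (hB : Bf τ t k ≠ 0) : uf τ x t k * vdf τ t k = kf τ x t k := by
  have hne : Complex.I * (Bf τ t k : ℂ) ≠ 0 :=
    mul_ne_zero Complex.I_ne_zero (Complex.ofReal_ne_zero.2 hB)
  rw [uf, vdf, ← kf_eq]
  field_simp [Complex.ofReal_ne_zero.2 hB]

lemma int_xexp (x c d : ℝ) :
    ∫ k in c..d, x * Real.exp (-(k*x)) = Real.exp (-(c*x)) - Real.exp (-(d*x)) := by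
  have hF : ∀ k ∈ Set.uIcc c d, HasDerivAt (fun k => -Real.exp (-(k*x))) (x * Real.exp (-(k*x))) k := by
    intro k _
    have h1 : HasDerivAt (fun k : ℝ => -(k*x)) (-x) k := by
      exact ((hasDerivAt_id k).mul_const x).neg.congr_deriv (by ring)
    have := h1.exp.neg
    exact this.congr_deriv (by ring)
  have := intervalIntegral.integral_eq_sub_of_hasDerivAt hF
    (Continuous.intervalIntegrable (by fun_prop) c d)
  rw [this]
  ring

lemma int_invsq (τ t c d : ℝ) (hcd : c ≤ d) (hBne : ∀ k ∈ Set.Icc c d, Bf τ t k ≠ 0) :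
    ∫ k in c..d, 2*t/(Bf τ t k)^2 = (Bf τ t c)⁻¹ - (Bf τ t d)⁻¹ := by
  have huIcc : Set.uIcc c d = Set.Icc c d := Set.uIcc_of_le hcd
  have hF : ∀ k ∈ Set.uIcc c d, HasDerivAt (fun k => -(Bf τ t k)⁻¹) (2*t/(Bf τ t k)^2) k := by
    intro k hk
    rw [huIcc] at hk
    have := ((Bf_hasDeriv τ t k).inv (hBne k hk)).neg
    exact this.congr_deriv (by ring)
  have hint : IntervalIntegrable (fun k => 2*t/(Bf τ t k)^2) volume c d := by
    apply ContinuousOn.intervalIntegrable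
    rw [huIcc]
    exact continuousOn_const.div (((Bf_cont τ t).pow 2).continuousOn)
      (fun k hk => pow_ne_zero 2 (hBne k hk))
  rw [intervalIntegral.integral_eq_sub_of_hasDerivAt hF hint]
  ring

lemma udf_norm_le (τ x t c d m k : ℝ) (ht : 0 < t) (hx : 0 ≤ x) (hc : 0 ≤ c) (hm : 0 < m)
    (hk : k ∈ Set.Icc c d) (habs : m ≤ |Bf τ t k|) :
    ‖udf τ x t k‖ ≤ x * Real.exp (-(k*x)) * m⁻¹ + 2*t/(Bf τ t k)^2 := by
  set e := Real.exp (-(k*x)) with he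
  have he0 : 0 < e := Real.exp_pos _
  have he1 : e ≤ 1 := by
    rw [he, Real.exp_le_one_iff]
    nlinarith [hk.1]
  have hB0 : 0 < |Bf τ t k| := lt_of_lt_of_le hm habs
  have hBne : Bf τ t k ≠ 0 := by
    intro h
    rw [h] at hB0
    simp at hB0
  have h1 : ‖(-(x:ℂ) * Af x k) * (Complex.I * (Bf τ t k : ℂ))‖ = x * e * |Bf τ t k| := by
    rw [norm_mul, norm_mul, IB_norm, Af_norm, norm_neg, Complex.norm_real,
      Real.norm_eq_abs, _root_.abs_of_nonneg hx, he]
  have h2 : ‖Af x k * (Complex.I * (2*t : ℂ))‖ = e * (2*t) := by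
    rw [norm_mul, Af_norm, ← he, norm_mul, Complex.norm_I, one_mul]
    congr 1
    rw [show ((2:ℂ)*t) = (((2*t : ℝ)) : ℂ) by push_cast; ring, Complex.norm_real,
      Real.norm_eq_abs, _root_.abs_of_pos (by linarith)]
  have hnum : ‖(-(x:ℂ) * Af x k) * (Complex.I * (Bf τ t k : ℂ)) - Af x k * (Complex.I * (2*t : ℂ))‖
      ≤ x * e * |Bf τ t k| + e * (2*t) := by
    refine le_trans (norm_sub_le _ _) ?_
    rw [h1, h2]
  have hden : ‖(Complex.I * (Bf τ t k : ℂ))^2‖ = (Bf τ t k)^2 := by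
    rw [norm_pow, IB_norm, _root_.sq_abs]
  rw [udf, norm_div, hden]
  have hBsq : (0:ℝ) < (Bf τ t k)^2 := by positivity
  have s1 : x * e / |Bf τ t k| ≤ x * e * m⁻¹ := by
    rw [div_eq_mul_inv]
    exact mul_le_mul_of_nonneg_left (inv_anti₀ hm habs) (by positivity)
  have s2 : e * (2*t) / (Bf τ t k)^2 ≤ 2*t/(Bf τ t k)^2 := by
    gcongr ?_ / _
    nlinarith
  have key : (x * e * |Bf τ t k| + e * (2*t)) / (Bf τ t k)^2 ≤ x * e * m⁻¹ + 2*t/(Bf τ t k)^2 := by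
    rw [add_div]
    refine add_le_add ?_ s2
    have hq : x * e * |Bf τ t k| / (Bf τ t k)^2 = x * e / |Bf τ t k| := by
      rw [← _root_.sq_abs (Bf τ t k), sq]
      field_simp
    rw [hq]
    exact s1
  exact le_trans (by gcongr) key

lemma piece_bound (τ x t c d m : ℝ) (ht : 0 < t) (hx : 0 ≤ x) (hc : 0 ≤ c) (hcd : c ≤ d)
    (hm : 0 < m) (hside : m ≤ Bf τ t c ∨ Bf τ t d ≤ -m) :
    ‖∫ k in c..d, kf τ x t k‖ ≤ 4 / m := by
  have huIcc : Set.uIcc c d = Set.Icc c d := Set.uIcc_of_le hcd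
  have hBmono : ∀ k₁ k₂ : ℝ, k₁ ≤ k₂ → Bf τ t k₁ ≤ Bf τ t k₂ := by
    intro k₁ k₂ h
    unfold Bf
    nlinarith
  have hBabs : ∀ k ∈ Set.Icc c d, m ≤ |Bf τ t k| := by
    intro k hk
    rcases hside with h | h
    · have h2 := hBmono c k hk.1
      rw [_root_.abs_of_pos (by linarith)]
      linarith
    · have h2 := hBmono k d hk.2
      rw [_root_.abs_of_neg (by linarith)]
      linarith
  have hBne : ∀ k ∈ Set.Icc c d, Bf τ t k ≠ 0 := by
    intro k hk h
    have h2 := hBabs k hk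
    rw [h, abs_zero] at h2
    linarith
  have hIBP : ∫ k in c..d, uf τ x t k * vdf τ t k
      = uf τ x t d * vf τ t d - uf τ x t c * vf τ t c - ∫ k in c..d, udf τ x t k * vf τ t k := by
    apply intervalIntegral.integral_mul_deriv_eq_deriv_mul
    · intro k hk
      rw [huIcc] at hk
      exact uf_hasDeriv τ x t k (hBne k hk)
    · intro k _
      exact vf_hasDeriv τ t k
    · apply ContinuousOn.intervalIntegrable
      rw [huIcc]
      unfold udf
      apply ContinuousOn.div
      · apply Continuous.continuousOn
        unfold Af Bf
        fun_prop
      · apply Continuous.continuousOn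
        unfold Bf
        fun_prop
      · intro k hk
        exact pow_ne_zero 2 (mul_ne_zero Complex.I_ne_zero (Complex.ofReal_ne_zero.2 (hBne k hk)))
    · exact (vdf_cont τ t).intervalIntegrable c d
  have heq : ∫ k in c..d, kf τ x t k = ∫ k in c..d, uf τ x t k * vdf τ t k := by
    apply intervalIntegral.integral_congr
    intro k hk
    rw [huIcc] at hk
    exact (uv_eq τ x t k (hBne k hk)).symm
  have hbound_u : ∀ k ∈ Set.Icc c d, ‖uf τ x t k * vf τ t k‖ ≤ 1/m := by
    intro k hk
    rw [norm_mul, vf_norm, mul_one, uf, norm_div, Af_norm, IB_norm]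
    refine div_le_div₀ zero_le_one ?_ hm (hBabs k hk)
    rw [Real.exp_le_one_iff]
    nlinarith [hk.1]
  -- integrability of the bounding function pieces
  have hint1 : IntervalIntegrable (fun k => x * Real.exp (-(k*x)) * m⁻¹) volume c d :=
    Continuous.intervalIntegrable (by fun_prop) c d
  have hint2 : IntervalIntegrable (fun k => 2*t/(Bf τ t k)^2) volume c d := by
    apply ContinuousOn.intervalIntegrable
    rw [huIcc]
    refine continuousOn_const.div (((Bf_cont τ t).pow 2).continuousOn) ?_
    intro k hk
    exact pow_ne_zero 2 (hBne k hk)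
  have hintbound : ‖∫ k in c..d, udf τ x t k * vf τ t k‖
      ≤ |∫ k in c..d, (x * Real.exp (-(k*x)) * m⁻¹ + 2*t/(Bf τ t k)^2)| := by
    apply intervalIntegral.norm_integral_le_abs_of_norm_le
    · apply MeasureTheory.ae_restrict_of_forall_mem measurableSet_uIoc
      intro k hk
      rw [Set.uIoc_of_le hcd] at hk
      have hk' : k ∈ Set.Icc c d := Set.Ioc_subset_Icc_self hk
      rw [norm_mul, vf_norm, mul_one]
      exact udf_norm_le τ x t c d m k ht hx hc hm hk' (hBabs k hk')
    · exact hint1.add hint2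
  have hval : ∫ k in c..d, (x * Real.exp (-(k*x)) * m⁻¹ + 2*t/(Bf τ t k)^2)
      = (Real.exp (-(c*x)) - Real.exp (-(d*x))) * m⁻¹ + ((Bf τ t c)⁻¹ - (Bf τ t d)⁻¹) := by
    rw [intervalIntegral.integral_add hint1 hint2, int_invsq τ t c d hcd hBne]
    congr 1
    rw [intervalIntegral.integral_mul_const, int_xexp]
  have hA1 : (Real.exp (-(c*x)) - Real.exp (-(d*x))) * m⁻¹ ≤ m⁻¹ := by
    have h1 : Real.exp (-(c*x)) ≤ 1 := by
      rw [Real.exp_le_one_iff]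
      nlinarith
    have h2 := Real.exp_pos (-(d*x))
    have : Real.exp (-(c*x)) - Real.exp (-(d*x)) ≤ 1 := by linarith
    nlinarith [inv_pos.2 hm]
  have hA2 : (Bf τ t c)⁻¹ - (Bf τ t d)⁻¹ ≤ m⁻¹ := by
    have hmono := hBmono c d hcd
    rcases hside with h | h
    · have h1 : (Bf τ t c)⁻¹ ≤ m⁻¹ := inv_anti₀ hm h
      have h2 : 0 < (Bf τ t d)⁻¹ := inv_pos.2 (by linarith)
      linarith
    · have h1 : (Bf τ t c)⁻¹ ≤ 0 := inv_nonpos.2 (by linarith)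
      have h2 : (-(Bf τ t d))⁻¹ ≤ m⁻¹ := inv_anti₀ hm (by linarith)
      rw [inv_neg] at h2
      linarith
  have hpos1 : 0 ≤ (Real.exp (-(c*x)) - Real.exp (-(d*x))) * m⁻¹ := by
    have h1 : Real.exp (-(d*x)) ≤ Real.exp (-(c*x)) := by
      apply Real.exp_le_exp.2
      nlinarith
    have h2 : (0:ℝ) ≤ m⁻¹ := by positivity
    nlinarith
  have hpos2 : 0 ≤ (Bf τ t c)⁻¹ - (Bf τ t d)⁻¹ := by
    have hmono := hBmono c d hcd
    rcases hside with h | h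
    · have h1 : 0 < Bf τ t c := by linarith
      have h2 := inv_anti₀ h1 hmono
      linarith
    · have h2 := inv_anti₀ (by linarith : (0:ℝ) < -(Bf τ t d))
        (by linarith : -(Bf τ t d) ≤ -(Bf τ t c))
      rw [inv_neg, inv_neg] at h2
      linarith
  rw [heq, hIBP]
  have hfinal : ‖uf τ x t d * vf τ t d - uf τ x t c * vf τ t c - ∫ k in c..d, udf τ x t k * vf τ t k‖
      ≤ 1/m + 1/m + (m⁻¹ + m⁻¹) := by
    refine le_trans (norm_sub_le _ _) ?_
    refine add_le_add (le_trans (norm_sub_le _ _) ?_) ?_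
    · exact add_le_add (hbound_u d ⟨hcd, le_rfl⟩) (hbound_u c ⟨le_rfl, hcd⟩)
    · refine le_trans hintbound ?_
      rw [hval, _root_.abs_of_nonneg (by linarith)]
      exact add_le_add hA1 hA2
  refine le_trans hfinal (le_of_eq ?_)
  field_simp
  ring

lemma kf_norm_le (τ x t k : ℝ) (hx : 0 ≤ x) (hk : 0 ≤ k) : ‖kf τ x t k‖ ≤ 1 := by
  rw [← kf_eq, norm_mul, vf_norm, mul_one, Af_norm, Real.exp_le_one_iff]
  nlinarith

lemma kernel_pos (x b τ t : ℝ) (hx : 0 ≤ x) (hb : 0 ≤ b) (ht : 0 < t) :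
    ‖∫ k in (0:ℝ)..b, kf τ x t k‖ ≤ 6 / Real.sqrt t := by
  set s := Real.sqrt t with hs
  have hs0 : 0 < s := Real.sqrt_pos.2 ht
  set δ := s⁻¹ with hδ
  have hδ0 : 0 < δ := by positivity
  have hts : t * δ = s := by
    rw [hδ]
    field_simp
    rw [hs]
    exact (Real.sq_sqrt ht.le).symm
  set k₀ := τ/(2*t) with hk0
  have hk0p : 2*t*k₀ = τ := by
    rw [hk0]
    field_simp
  set p := min (max 0 (k₀ - δ)) b with hp
  set q := min (max 0 (k₀ + δ)) b with hq
  have hp0 : 0 ≤ p := le_min (le_max_left _ _) hb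
  have hpq : p ≤ q := min_le_min (max_le_max le_rfl (by linarith)) le_rfl
  have hqb : q ≤ b := min_le_right _ _
  have hqp2 : q - p ≤ 2*δ := by
    have h1 : max 0 (k₀ + δ) ≤ max 0 (k₀ - δ) + 2*δ := by
      apply max_le
      · linarith [le_max_left 0 (k₀ - δ)]
      · linarith [le_max_right 0 (k₀ - δ)]
    have h2 : q ≤ p + 2*δ := by
      calc q ≤ min (max 0 (k₀ - δ) + 2*δ) (b + 2*δ) := min_le_min h1 (by linarith)
        _ = p + 2*δ := by rw [← min_add_add_right]
    linarith
  have hii : ∀ c d : ℝ, IntervalIntegrable (kf τ x t) volume c d :=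
    fun c d => (kf_cont τ x t).intervalIntegrable c d
  have hsplit : ∫ k in (0:ℝ)..b, kf τ x t k
      = (∫ k in (0:ℝ)..p, kf τ x t k) + (∫ k in p..q, kf τ x t k) + (∫ k in q..b, kf τ x t k) := by
    rw [intervalIntegral.integral_add_adjacent_intervals (hii 0 p) (hii p q),
      intervalIntegral.integral_add_adjacent_intervals (hii 0 q) (hii q b)]
  have hmid : ‖∫ k in p..q, kf τ x t k‖ ≤ 2*δ := by
    have hb1 : ∀ k ∈ Set.uIoc p q, ‖kf τ x t k‖ ≤ 1 := by
      intro k hk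
      rw [Set.uIoc_of_le hpq] at hk
      exact kf_norm_le τ x t k hx (le_trans hp0 hk.1.le)
    refine le_trans (intervalIntegral.norm_integral_le_of_norm_le_const hb1) ?_
    rw [one_mul, _root_.abs_of_nonneg (by linarith)]
    linarith
  have hleft : ‖∫ k in (0:ℝ)..p, kf τ x t k‖ ≤ 4 / (2*s) := by
    rcases eq_or_lt_of_le hp0 with h | h
    · rw [← h]
      simp only [intervalIntegral.integral_same, norm_zero]
      positivity
    · have h3 : 0 < k₀ - δ := by
        by_contra h4
        push_neg at h4
        have h2 : 0 < max 0 (k₀ - δ) := lt_of_lt_of_le h (min_le_left _ _)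
        rw [max_eq_left h4] at h2
        exact lt_irrefl 0 h2
      have h1 : p ≤ k₀ - δ := by
        calc p ≤ max 0 (k₀ - δ) := min_le_left _ _
          _ = k₀ - δ := max_eq_right h3.le
      apply piece_bound τ x t 0 p (2*s) ht hx le_rfl h.le (by linarith)
      right
      show 2*t*p - τ ≤ -(2*s)
      rw [← hk0p]
      nlinarith
  have hright : ‖∫ k in q..b, kf τ x t k‖ ≤ 4 / (2*s) := by
    rcases eq_or_lt_of_le hqb with h | h
    · rw [h]
      simp only [intervalIntegral.integral_same, norm_zero]
      positivity
    · have h1 : k₀ + δ ≤ q := by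
        rcases min_cases (max 0 (k₀ + δ)) b with ⟨he, _⟩ | ⟨he, hlt⟩
        · rw [hq, he]
          exact le_max_right _ _
        · rw [hq, he] at h
          exact absurd rfl h.ne
      apply piece_bound τ x t q b (2*s) ht hx (le_trans hp0 hpq) h.le (by linarith)
      left
      show 2*s ≤ 2*t*q - τ
      rw [← hk0p]
      nlinarith
  rw [hsplit]
  refine le_trans (norm_add₃_le) ?_
  have harith : 4/(2*s) + 2*δ + 4/(2*s) = 6/s := by
    rw [hδ]
    field_simp
    ring
  calc ‖∫ k in (0:ℝ)..p, kf τ x t k‖ + ‖∫ k in p..q, kf τ x t k‖ + ‖∫ k in q..b, kf τ x t k‖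
      ≤ 4/(2*s) + 2*δ + 4/(2*s) := by
        refine add_le_add (add_le_add hleft hmid) hright
    _ = 6/s := harith

lemma interval_conj (a b : ℝ) (f : ℝ → ℂ) :
    ∫ k in a..b, (starRingEnd ℂ) (f k) = (starRingEnd ℂ) (∫ k in a..b, f k) := by
  rw [intervalIntegral.intervalIntegral_eq_integral_uIoc,
    intervalIntegral.intervalIntegral_eq_integral_uIoc, integral_conj]
  split_ifs <;> simp

lemma kf_conj (τ x t k : ℝ) : kf τ x t k = (starRingEnd ℂ) (kf (-τ) x (-t) k) := by
  rw [kf, kf, ← Complex.exp_conj]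
  congr 1
  simp only [map_add, map_mul, map_neg, map_sub, map_pow, Complex.conj_ofReal, Complex.conj_I]
  push_cast
  ring

/-- The kernel of the representation `ℓ(τ; x, t, b) = ∫₀^b e^{−kx + i(k²t − kτ)} dk`. -/
noncomputable def kernelL (τ x t b : ℝ) : ℂ :=
  ∫ k in (0:ℝ)..b,
    Complex.exp (-(k : ℂ) * (x : ℂ) + Complex.I * ((k : ℂ) ^ 2 * (t : ℂ) - (k : ℂ) * (τ : ℂ)))

/-- Dispersive estimate for the kernel of the representation: `|ℓ(τ;x,t,b)| ≤ c |t|^{-1/2}`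
uniformly in `x, b ∈ [0,∞)` and `τ ∈ ℝ`. -/
theorem kernel_dispersive_estimate :
    ∃ c : ℝ, 0 < c ∧ ∀ x b τ t : ℝ, 0 ≤ x → 0 ≤ b → t ≠ 0 →
      ‖kernelL τ x t b‖ ≤ c * |t| ^ (-(1 / 2) : ℝ) := by
  refine ⟨6, by norm_num, ?_⟩
  intro x b τ t hx hb ht
  have habs : |t| ^ (-(1/2) : ℝ) = (Real.sqrt |t|)⁻¹ := by
    rw [Real.rpow_neg (abs_nonneg t), Real.sqrt_eq_rpow]
  rw [habs]
  have hker : kernelL τ x t b = ∫ k in (0:ℝ)..b, kf τ x t k := rfl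
  rcases ht.lt_or_gt with htneg | htpos
  · have h1 : kernelL τ x t b = (starRingEnd ℂ) (∫ k in (0:ℝ)..b, kf (-τ) x (-t) k) := by
      rw [hker, ← interval_conj]
      exact intervalIntegral.integral_congr fun k _ => kf_conj τ x t k
    rw [h1, RCLike.norm_conj, abs_of_neg htneg]
    have := kernel_pos x b (-τ) (-t) hx hb (by linarith)
    rw [div_eq_mul_inv] at this
    exact this
  · rw [hker, abs_of_pos htpos]
    have := kernel_pos x b τ t hx hb htpos
    rw [div_eq_mul_inv] at this
    exact this
end

section
/- There exists a constant c > 0 such that for every such H₁ and every t ≠ 0, sup_{x ≥ 0} |u₁(x,t)| ≤ c |t|^{−1/2} ‖H₁‖_{L¹(ℝ)}. -/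
set_option maxHeartbeats 1000000

open MeasureTheory Complex Set Real Filter Topology

/-- Fourier transform with the convention `ĥ(k) = ∫_ℝ e^{−ikτ} h(τ) dτ`. -/
noncomputable def fourierT (h : ℝ → ℂ) (k : ℝ) : ℂ :=
  ∫ τ : ℝ, Complex.exp (-(Complex.I * (k : ℂ) * (τ : ℂ))) * h τ

/-- `u₁(x,t) = ∫₀^∞ e^{−kx + ik²t} Ĥ₁(k) dk`. -/
noncomputable def uOne (H₁ : ℝ → ℂ) (x t : ℝ) : ℂ :=
  ∫ k in Set.Ioi (0:ℝ),
    Complex.exp (-(k : ℂ) * (x : ℂ) + Complex.I * (k : ℂ) ^ 2 * (t : ℂ)) * fourierT H₁ k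

lemma norm_f (t x a k : ℝ) :
    ‖Complex.exp (-(k:ℂ)*x + I*t*((k:ℂ)-a)^2)‖ = rexp (-(k*x)) := by
  have h : -(k:ℂ)*x + I*t*((k:ℂ)-a)^2 = ((-(k*x) : ℝ) : ℂ) + ((t*(k-a)^2 : ℝ):ℂ) * I := by
    push_cast; ring
  rw [h, Complex.norm_exp]
  simp only [Complex.add_re, Complex.ofReal_re, Complex.mul_re, Complex.I_re, Complex.I_im,
    Complex.ofReal_im]
  ring_nf

lemma norm_D (t a k : ℝ) : ‖2*I*(t:ℂ)*((k:ℂ)-a)‖ = 2 * |t| * |k - a| := by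
  have h : 2*I*(t:ℂ)*((k:ℂ)-a) = (((2:ℝ)*t*(k-a) : ℝ) : ℂ) * I := by push_cast; ring
  rw [h, norm_mul, Complex.norm_I, Complex.norm_real]
  rw [Real.norm_eq_abs, abs_mul, abs_mul]
  norm_num

lemma cont_f (t x a : ℝ) :
    Continuous (fun k : ℝ => Complex.exp (-(k:ℂ)*x + I*t*((k:ℂ)-a)^2)) := by
  fun_prop

lemma f_integrableOn (t x a c : ℝ) (hx : 0 < x) :
    IntegrableOn (fun k : ℝ => Complex.exp (-(k:ℂ)*x + I*t*((k:ℂ)-a)^2)) (Ioi c) := by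
  apply Integrable.mono' (exp_neg_integrableOn_Ioi c hx)
    ((cont_f t x a).aestronglyMeasurable.restrict)
  filter_upwards with k
  rw [norm_f]
  simp [mul_comm]

lemma key_deriv (t x a : ℝ) (ht : t ≠ 0) (k : ℝ) (hk : k ≠ a) :
    HasDerivAt (fun k : ℝ => Complex.exp (-(k:ℂ)*x + I*t*((k:ℂ)-a)^2) / (2*I*t*((k:ℂ)-a)))
      (Complex.exp (-(k:ℂ)*x + I*t*((k:ℂ)-a)^2)
        - Complex.exp (-(k:ℂ)*x + I*t*((k:ℂ)-a)^2)
          * ((x:ℂ)/(2*I*t*((k:ℂ)-a)) + 2*I*t/(2*I*t*((k:ℂ)-a))^2)) k := by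
  have hka : (k:ℂ) - a ≠ 0 := by
    simpa [sub_eq_zero] using fun h => hk (by exact_mod_cast h)
  have htC : (t:ℂ) ≠ 0 := by exact_mod_cast ht
  have hD : (2*I*(t:ℂ)*((k:ℂ)-a)) ≠ 0 := by
    simp [Complex.I_ne_zero, htC, hka]
  have hid : HasDerivAt (fun k:ℝ => ((k:ℝ):ℂ)) 1 k := Complex.ofRealCLM.hasDerivAt
  have hsub : HasDerivAt (fun k:ℝ => (k:ℂ) - a) 1 k := hid.sub_const _
  have hsq : HasDerivAt (fun k:ℝ => ((k:ℂ)-a)^2) (2*((k:ℂ)-a)) k := by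
    have h2 := hsub.fun_mul hsub
    have he : (fun k:ℝ => ((k:ℂ)-a)^2) = fun k:ℝ => ((k:ℂ)-a)*((k:ℂ)-a) := by
      ext y; ring
    rw [he]
    convert! h2 using 1
    ring
  have hg : HasDerivAt (fun k:ℝ => -(k:ℂ)*x + I*t*((k:ℂ)-a)^2)
      (-(x:ℂ) + I*t*(2*((k:ℂ)-a))) k := by
    have h1 : HasDerivAt (fun k:ℝ => -(k:ℂ)*x) (-(x:ℂ)) k := by
      simpa using (hid.neg.mul_const (x:ℂ))
    exact h1.add (hsq.const_mul (I*(t:ℂ)))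
  have hf : HasDerivAt (fun k:ℝ => Complex.exp (-(k:ℂ)*x + I*t*((k:ℂ)-a)^2))
      (Complex.exp (-(k:ℂ)*x + I*t*((k:ℂ)-a)^2) * (-(x:ℂ) + I*t*(2*((k:ℂ)-a)))) k := hg.cexp
  have hDd : HasDerivAt (fun k:ℝ => 2*I*(t:ℂ)*((k:ℂ)-a)) (2*I*(t:ℂ)) k := by
    simpa using hsub.const_mul (2*I*(t:ℂ))
  have h := hf.fun_div hDd hD
  convert! h using 1
  field_simp
  ring

lemma norm_E_le (t x a k δ : ℝ) (ht : t ≠ 0) (hδpos : 0 < δ) (hδ : δ * δ = |t|⁻¹)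
    (hk : 0 ≤ k) (hx : 0 ≤ x) (hka : δ ≤ |k - a|) :
    ‖Complex.exp (-(k:ℂ)*x + I*t*((k:ℂ)-a)^2)
        * ((x:ℂ)/(2*I*t*((k:ℂ)-a)) + 2*I*t/(2*I*t*((k:ℂ)-a))^2)‖
      ≤ δ/2 * (x * rexp (-(x*k))) + δ*δ/2 * ((k-a)^2)⁻¹ := by
  have habs : (0:ℝ) < |t| := abs_pos.2 ht
  have hδ1 : |t| * (δ * δ) = 1 := by rw [hδ]; exact mul_inv_cancel₀ habs.ne'
  have hs : 0 < |k - a| := lt_of_lt_of_le hδpos hka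
  have h2I : ‖(2*I*(t:ℂ))‖ = 2 * |t| := by
    have h : 2*I*(t:ℂ) = (((2:ℝ)*t : ℝ) : ℂ) * I := by push_cast; ring
    rw [h, norm_mul, Complex.norm_I, Complex.norm_real, Real.norm_eq_abs, abs_mul]
    norm_num
  rw [norm_mul, norm_f]
  have hb : ‖(x:ℂ)/(2*I*t*((k:ℂ)-a)) + 2*I*t/(2*I*t*((k:ℂ)-a))^2‖
      ≤ x / (2 * |t| * |k - a|) + 2 * |t| / (2 * |t| * |k - a|)^2 := by
    refine (norm_add_le _ _).trans ?_
    gcongr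
    · rw [norm_div, norm_D, Complex.norm_real, Real.norm_eq_abs, _root_.abs_of_nonneg hx]
    · rw [norm_div, norm_pow, norm_D, h2I]
  have h1 : x / (2 * |t| * |k - a|) ≤ δ/2 * x := by
    rw [div_le_iff₀ (by positivity)]
    have h0 : |t| * δ ≤ |t| * |k - a| := mul_le_mul_of_nonneg_left hka habs.le
    have h0' : δ * (|t| * δ) ≤ δ * (|t| * |k - a|) := mul_le_mul_of_nonneg_left h0 hδpos.le
    have h0'' : x * (δ * (|t| * δ)) ≤ x * (δ * (|t| * |k - a|)) :=
      mul_le_mul_of_nonneg_left h0' hx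
    have e : x * (δ * (|t| * δ)) = x := by
      rw [show δ * (|t| * δ) = |t| * (δ * δ) by ring, hδ1, mul_one]
    nlinarith [h0'']
  have h2 : 2 * |t| / (2 * |t| * |k - a|)^2 = δ*δ/2 * ((k-a)^2)⁻¹ := by
    have hne : (k-a)^2 ≠ 0 := by
      have : k - a ≠ 0 := by intro h; rw [h] at hs; simp at hs
      positivity
    have hpw : (2*|t| * |k - a|)^2 = 4 * t^2 * (k-a)^2 := by
      rw [mul_pow, mul_pow, _root_.sq_abs, _root_.sq_abs]; ring
    have h3 : t^2 = |t| * |t| := by rw [sq]; exact (abs_mul_abs_self t).symm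
    have h2' : t^2*(δ*δ) = |t| := by rw [h3, mul_assoc, hδ1, mul_one]
    rw [hpw]
    field_simp
    rw [div_left_inj' hne]
    linear_combination (-4) * h2'
  have hr1 : rexp (-(k*x)) ≤ 1 := Real.exp_le_one_iff.2 (by nlinarith)
  have hrpos : (0:ℝ) < rexp (-(k*x)) := Real.exp_pos _
  have hxk : rexp (-(x*k)) = rexp (-(k*x)) := by ring_nf
  calc rexp (-(k*x)) * ‖(x:ℂ)/(2*I*t*((k:ℂ)-a)) + 2*I*t/(2*I*t*((k:ℂ)-a))^2‖
      ≤ rexp (-(k*x)) * (x / (2 * |t| * |k - a|) + 2 * |t| / (2 * |t| * |k - a|)^2) :=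
        mul_le_mul_of_nonneg_left hb hrpos.le
    _ = rexp (-(k*x)) * (x / (2 * |t| * |k - a|))
        + rexp (-(k*x)) * (2 * |t| / (2 * |t| * |k - a|)^2) := mul_add _ _ _
    _ ≤ δ/2 * (x * rexp (-(x*k))) + δ*δ/2 * ((k-a)^2)⁻¹ := by
        rw [hxk]
        gcongr ?_ + ?_
        · calc rexp (-(k*x)) * (x / (2 * |t| * |k - a|)) ≤ rexp (-(k*x)) * (δ/2 * x) :=
                mul_le_mul_of_nonneg_left h1 hrpos.le
            _ = δ/2 * (x * rexp (-(k*x))) := by ring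
        · rw [h2]
          exact mul_le_of_le_one_left (by positivity) hr1

lemma exp_deriv_aux (x : ℝ) (k : ℝ) :
    HasDerivAt (fun k : ℝ => -(rexp (-(x*k)))) (x * rexp (-(x*k))) k := by
  have h1 : HasDerivAt (fun k : ℝ => -(x*k)) (-x) k := by
    simpa using ((hasDerivAt_id k).const_mul x).fun_neg
  have h2 := h1.exp.fun_neg
  convert! h2 using 1
  ring

lemma exp_tendsto_aux (x : ℝ) (hx : 0 < x) :
    Tendsto (fun k : ℝ => -(rexp (-(x*k)))) atTop (𝓝 0) := by
  have h : Tendsto (fun k : ℝ => rexp (-(x*k))) atTop (𝓝 0) := by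
    apply Real.tendsto_exp_atBot.comp
    exact (tendsto_neg_atTop_atBot.comp (tendsto_id.const_mul_atTop hx))
  simpa using h.neg

lemma int_exp_Ioi (x c : ℝ) (hx : 0 < x) :
    (∫ k in Ioi c, x * rexp (-(x*k))) = rexp (-(x*c)) := by
  have h := integral_Ioi_of_hasDerivAt_of_nonneg'
    (g := fun k : ℝ => -(rexp (-(x*k)))) (g' := fun k => x * rexp (-(x*k))) (a := c) (l := 0)
    (fun k _ => exp_deriv_aux x k) (fun k _ => by positivity) (exp_tendsto_aux x hx)
  rw [h]
  ring

lemma intOn_exp_Ioi (x c : ℝ) (hx : 0 < x) :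
    IntegrableOn (fun k => x * rexp (-(x*k))) (Ioi c) :=
  integrableOn_Ioi_deriv_of_nonneg' (fun k _ => exp_deriv_aux x k)
    (fun k _ => by positivity) (exp_tendsto_aux x hx)

lemma invsq_deriv_aux (a c : ℝ) (h : a < c) (k : ℝ) (hk : k ∈ Ici c) :
    HasDerivAt (fun k : ℝ => -(k-a)⁻¹) (((k-a)^2)⁻¹) k := by
  have hne : k - a ≠ 0 := by have := lt_of_lt_of_le h hk; intro hh; linarith [sub_eq_zero.1 hh]
  have h1 : HasDerivAt (fun k : ℝ => k - a) 1 k := (hasDerivAt_id k).sub_const a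
  have h2 := (h1.fun_inv hne).fun_neg
  convert! h2 using 1
  field_simp

lemma invsq_tendsto_aux (a : ℝ) :
    Tendsto (fun k : ℝ => -(k-a)⁻¹) atTop (𝓝 0) := by
  have h : Tendsto (fun k : ℝ => k - a) atTop atTop := tendsto_atTop_add_const_right _ _ tendsto_id
  simpa using (h.inv_tendsto_atTop).neg

lemma int_invsq_Ioi (a c : ℝ) (h : a < c) :
    (∫ k in Ioi c, ((k-a)^2)⁻¹) = (c-a)⁻¹ := by
  have hh := integral_Ioi_of_hasDerivAt_of_nonneg'
    (g := fun k : ℝ => -(k-a)⁻¹) (g' := fun k => ((k-a)^2)⁻¹) (a := c) (l := 0)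
    (invsq_deriv_aux a c h) (fun k _ => by positivity) (invsq_tendsto_aux a)
  rw [hh]
  ring

lemma intOn_invsq_Ioi (a c : ℝ) (h : a < c) :
    IntegrableOn (fun k => ((k-a)^2)⁻¹) (Ioi c) :=
  integrableOn_Ioi_deriv_of_nonneg' (invsq_deriv_aux a c h)
    (fun k _ => by positivity) (invsq_tendsto_aux a)

lemma inv_D_le (t δ s : ℝ) (ht : t ≠ 0) (hδpos : 0 < δ) (hδ : δ * δ = |t|⁻¹) (hs : δ ≤ s) :
    (2 * |t| * s)⁻¹ ≤ δ/2 := by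
  have habs : (0:ℝ) < |t| := abs_pos.2 ht
  have hδ1 : |t| * (δ * δ) = 1 := by rw [hδ]; exact mul_inv_cancel₀ habs.ne'
  have hspos : 0 < s := lt_of_lt_of_le hδpos hs
  rw [inv_le_iff_one_le_mul₀ (by positivity)]
  have h0 : δ * (|t| * δ) ≤ δ * (|t| * s) :=
    mul_le_mul_of_nonneg_left (mul_le_mul_of_nonneg_left hs habs.le) hδpos.le
  nlinarith [h0]

lemma tail_bound (t x a c δ : ℝ) (ht : t ≠ 0) (hx : 0 < x) (hδpos : 0 < δ)
    (hδ : δ * δ = |t|⁻¹) (hc : 0 ≤ c) (hca : δ ≤ c - a) :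
    ‖∫ k in Ioi c, Complex.exp (-(k:ℂ)*x + I*t*((k:ℂ)-a)^2)‖ ≤ 3/2 * δ := by
  have habs : (0:ℝ) < |t| := abs_pos.2 ht
  set f : ℝ → ℂ := fun k => Complex.exp (-(k:ℂ)*x + I*t*((k:ℂ)-a)^2) with hf
  set E : ℝ → ℂ := fun k => Complex.exp (-(k:ℂ)*x + I*t*((k:ℂ)-a)^2)
      * ((x:ℂ)/(2*I*t*((k:ℂ)-a)) + 2*I*t/(2*I*t*((k:ℂ)-a))^2) with hE
  set Φ : ℝ → ℂ := fun k => Complex.exp (-(k:ℂ)*x + I*t*((k:ℂ)-a)^2) / (2*I*t*((k:ℂ)-a)) with hΦ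
  have hac : a < c := by linarith
  have hne : ∀ k ∈ Ici c, k ≠ a := fun k hk => by
    have : c ≤ k := hk; intro h; rw [h] at this; linarith
  have hka' : ∀ k, c ≤ k → δ ≤ |k - a| := fun k hk => by
    rw [abs_of_pos (by linarith)]; linarith
  -- bound function for E
  set B : ℝ → ℝ := fun k => δ/2 * (x * rexp (-(x*k))) + δ*δ/2 * ((k-a)^2)⁻¹ with hB
  have hBint : IntegrableOn B (Ioi c) := by
    apply Integrable.add
    · exact (intOn_exp_Ioi x c hx).const_mul _
    · exact (intOn_invsq_Ioi a c hac).const_mul _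
  have hDcont : Continuous (fun k : ℝ => 2*I*(t:ℂ)*((k:ℂ)-a)) := by fun_prop
  have hDne : ∀ k ∈ Ioi c, (2*I*(t:ℂ)*((k:ℂ)-a)) ≠ 0 := by
    intro k hk
    have h1 : ‖2*I*(t:ℂ)*((k:ℂ)-a)‖ ≠ 0 := by
      rw [norm_D]
      have h0 : 0 < |k - a| := lt_of_lt_of_le hδpos (hka' k (le_of_lt hk))
      positivity
    exact fun h => h1 (by rw [h]; simp)
  have hEcont : ContinuousOn E (Ioi c) := by
    apply ContinuousOn.mul (Continuous.continuousOn (by fun_prop))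
    apply ContinuousOn.add
    · exact ContinuousOn.div continuous_const.continuousOn hDcont.continuousOn hDne
    · exact ContinuousOn.div continuous_const.continuousOn (hDcont.pow 2).continuousOn
        (fun k hk => pow_ne_zero 2 (hDne k hk))
  have hEint : IntegrableOn E (Ioi c) := by
    apply Integrable.mono' hBint (hEcont.aestronglyMeasurable measurableSet_Ioi)
    rw [ae_restrict_iff' measurableSet_Ioi]
    filter_upwards with k hk
    exact norm_E_le t x a k δ ht hδpos hδ (le_trans hc hk.le) hx.le (hka' k hk.le)
  have hfint : IntegrableOn f (Ioi c) := f_integrableOn t x a c hx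
  have hsubint : IntegrableOn (fun k => f k - E k) (Ioi c) := hfint.sub hEint
  have htend : Tendsto Φ atTop (𝓝 0) := by
    have hbnd : ∀ᶠ k in atTop, ‖Φ k‖ ≤ rexp (-(x*k)) * (δ/2) := by
      filter_upwards [eventually_ge_atTop c] with k hk
      simp only [hΦ]
      rw [norm_div, norm_f, norm_D]
      rw [div_eq_mul_inv, show -(k*x) = -(x*k) by ring]
      exact mul_le_mul_of_nonneg_left
        (inv_D_le t δ _ ht hδpos hδ (hka' k hk)) (Real.exp_pos _).le
    have hg : Tendsto (fun k : ℝ => rexp (-(x*k)) * (δ/2)) atTop (𝓝 0) := by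
      have h : Tendsto (fun k : ℝ => rexp (-(x*k))) atTop (𝓝 0) := by
        apply Real.tendsto_exp_atBot.comp
        exact (tendsto_neg_atTop_atBot.comp (tendsto_id.const_mul_atTop hx))
      simpa using h.mul_const (δ/2)
    exact squeeze_zero_norm' hbnd hg
  have hFTC : (∫ k in Ioi c, (f k - E k)) = 0 - Φ c :=
    integral_Ioi_of_hasDerivAt_of_tendsto'
      (fun k hk => key_deriv t x a ht k (hne k hk)) hsubint htend
  have hsplit : (∫ k in Ioi c, f k) = (∫ k in Ioi c, (f k - E k)) + (∫ k in Ioi c, E k) := by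
    rw [← integral_add hsubint hEint]
    congr 1; ext k; ring
  rw [hsplit, hFTC]
  have hΦc : ‖(0:ℂ) - Φ c‖ ≤ δ/2 := by
    rw [zero_sub, norm_neg]
    simp only [hΦ]
    rw [norm_div, norm_f, norm_D]
    have h1 : rexp (-(c*x)) ≤ 1 := Real.exp_le_one_iff.2 (by nlinarith)
    have h0 : 0 < |c - a| := lt_of_lt_of_le hδpos (hka' c le_rfl)
    calc rexp (-(c*x)) / (2 * |t| * |c - a|) ≤ 1 / (2 * |t| * |c - a|) := by gcongr
      _ = (2 * |t| * |c - a|)⁻¹ := one_div _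
      _ ≤ δ/2 := inv_D_le t δ _ ht hδpos hδ (hka' c le_rfl)
  have hEn : ‖∫ k in Ioi c, E k‖ ≤ δ := by
    have h1 : ‖∫ k in Ioi c, E k‖ ≤ ∫ k in Ioi c, B k := by
      apply norm_integral_le_of_norm_le hBint
      rw [ae_restrict_iff' measurableSet_Ioi]
      filter_upwards with k hk
      exact norm_E_le t x a k δ ht hδpos hδ (le_trans hc hk.le) hx.le (hka' k hk.le)
    have h2 : (∫ k in Ioi c, B k) ≤ δ := by
      simp only [hB]
      rw [integral_add ((intOn_exp_Ioi x c hx).const_mul _)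
        ((intOn_invsq_Ioi a c hac).const_mul _)]
      have i1 : (∫ k in Ioi c, δ/2 * (x * rexp (-(x*k)))) = δ/2 * rexp (-(x*c)) := by
        rw [integral_const_mul (δ/2), int_exp_Ioi x c hx]
      have i2 : (∫ k in Ioi c, δ*δ/2 * ((k-a)^2)⁻¹) = δ*δ/2 * (c-a)⁻¹ := by
        rw [integral_const_mul (δ*δ/2), int_invsq_Ioi a c hac]
      rw [i1, i2]
      have e1 : rexp (-(x*c)) ≤ 1 := Real.exp_le_one_iff.2 (by nlinarith)
      have e2 : (c-a)⁻¹ ≤ δ⁻¹ := by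
        apply inv_anti₀ hδpos hca
      have e3 : δ*δ/2 * (c-a)⁻¹ ≤ δ/2 := by
        calc δ*δ/2 * (c-a)⁻¹ ≤ δ*δ/2 * δ⁻¹ := mul_le_mul_of_nonneg_left e2 (by positivity)
          _ = δ/2 := by field_simp
      nlinarith [Real.exp_pos (-(x*c)), hδpos]
    linarith
  calc ‖(0 - Φ c) + ∫ k in Ioi c, E k‖ ≤ ‖(0:ℂ) - Φ c‖ + ‖∫ k in Ioi c, E k‖ := norm_add_le _ _
    _ ≤ δ/2 + δ := add_le_add hΦc hEn
    _ = 3/2 * δ := by ring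

lemma left_bound (t x a δ : ℝ) (ht : t ≠ 0) (hx : 0 < x) (hδpos : 0 < δ)
    (hδ : δ * δ = |t|⁻¹) (ha : δ ≤ a) :
    ‖∫ k in Ioc 0 (a - δ), Complex.exp (-(k:ℂ)*x + I*t*((k:ℂ)-a)^2)‖ ≤ 2 * δ := by
  have habs : (0:ℝ) < |t| := abs_pos.2 ht
  set m := a - δ with hm
  have hm0 : 0 ≤ m := by simp [hm]; linarith
  have hka' : ∀ k, k ≤ m → δ ≤ |k - a| := fun k hk => by
    rw [abs_of_neg (by simp [hm] at hk ⊢; linarith)]; simp [hm] at hk ⊢; linarith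
  have hne : ∀ k ∈ Icc 0 m, k ≠ a := fun k hk h => by
    have := hka' k hk.2; rw [h] at this; simp at this; linarith
  set f : ℝ → ℂ := fun k => Complex.exp (-(k:ℂ)*x + I*t*((k:ℂ)-a)^2) with hf
  set E : ℝ → ℂ := fun k => Complex.exp (-(k:ℂ)*x + I*t*((k:ℂ)-a)^2)
      * ((x:ℂ)/(2*I*t*((k:ℂ)-a)) + 2*I*t/(2*I*t*((k:ℂ)-a))^2) with hE
  set Φ : ℝ → ℂ := fun k => Complex.exp (-(k:ℂ)*x + I*t*((k:ℂ)-a)^2) / (2*I*t*((k:ℂ)-a)) with hΦ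
  have hDcont : Continuous (fun k : ℝ => 2*I*(t:ℂ)*((k:ℂ)-a)) := by fun_prop
  have hDne : ∀ k ∈ Icc (0:ℝ) m, (2*I*(t:ℂ)*((k:ℂ)-a)) ≠ 0 := by
    intro k hk
    have h1 : ‖2*I*(t:ℂ)*((k:ℂ)-a)‖ ≠ 0 := by
      rw [norm_D]
      have h0 : 0 < |k - a| := lt_of_lt_of_le hδpos (hka' k hk.2)
      positivity
    exact fun h => h1 (by rw [h]; simp)
  have hEcont : ContinuousOn E (Icc 0 m) := by
    apply ContinuousOn.mul (Continuous.continuousOn (by fun_prop))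
    apply ContinuousOn.add
    · exact ContinuousOn.div continuous_const.continuousOn hDcont.continuousOn hDne
    · exact ContinuousOn.div continuous_const.continuousOn (hDcont.pow 2).continuousOn
        (fun k hk => pow_ne_zero 2 (hDne k hk))
  have hfcont : Continuous f := by fun_prop
  have hEii : IntervalIntegrable E volume 0 m := by
    apply ContinuousOn.intervalIntegrable
    rwa [uIcc_of_le hm0]
  have hfii : IntervalIntegrable f volume 0 m := hfcont.intervalIntegrable 0 m
  have hsubii : IntervalIntegrable (fun k => f k - E k) volume 0 m := hfii.sub hEii
  have hFTC : (∫ k in (0:ℝ)..m, (f k - E k)) = Φ m - Φ 0 := by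
    apply intervalIntegral.integral_eq_sub_of_hasDerivAt
    · intro k hk
      rw [uIcc_of_le hm0] at hk
      exact key_deriv t x a ht k (hne k hk)
    · exact hsubii
  have hIoc : (∫ k in Ioc 0 m, f k) = ∫ k in (0:ℝ)..m, f k :=
    (intervalIntegral.integral_of_le hm0).symm
  have hsplit : (∫ k in (0:ℝ)..m, f k)
      = (∫ k in (0:ℝ)..m, (f k - E k)) + ∫ k in (0:ℝ)..m, E k := by
    rw [← intervalIntegral.integral_add hsubii hEii]
    congr 1; ext k; ring
  -- bound on Φ values
  have hΦval : ∀ k, 0 ≤ k → k ≤ m → ‖Φ k‖ ≤ δ/2 := by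
    intro k hk0 hkm
    simp only [hΦ]
    rw [norm_div, norm_f, norm_D]
    have h0 : 0 < |k - a| := lt_of_lt_of_le hδpos (hka' k hkm)
    have h1 : rexp (-(k*x)) ≤ 1 := Real.exp_le_one_iff.2 (by nlinarith)
    calc rexp (-(k*x)) / (2 * |t| * |k - a|) ≤ 1 / (2 * |t| * |k - a|) := by gcongr
      _ = (2 * |t| * |k - a|)⁻¹ := one_div _
      _ ≤ δ/2 := inv_D_le t δ _ ht hδpos hδ (hka' k hkm)
  -- bound on ∫ E
  have hEbound : ‖∫ k in (0:ℝ)..m, E k‖ ≤ δ := by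
    have j1 : (∫ k in (0:ℝ)..m, x * rexp (-(x*k))) = 1 - rexp (-(x*m)) := by
      have := intervalIntegral.integral_eq_sub_of_hasDerivAt
        (f := fun k : ℝ => -(rexp (-(x*k)))) (f' := fun k => x * rexp (-(x*k)))
        (a := (0:ℝ)) (b := m) (fun k _ => exp_deriv_aux x k)
        ((Continuous.intervalIntegrable (by fun_prop) 0 m))
      rw [this]; simp
      try linarith
    have j2 : (∫ k in (0:ℝ)..m, ((k-a)^2)⁻¹) = δ⁻¹ - a⁻¹ := by
      have hd : ∀ k ∈ uIcc (0:ℝ) m, HasDerivAt (fun k : ℝ => -(k-a)⁻¹) (((k-a)^2)⁻¹) k := by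
        intro k hk
        rw [uIcc_of_le hm0] at hk
        have hne' : k - a ≠ 0 := sub_ne_zero.2 (hne k hk)
        have h1 : HasDerivAt (fun k : ℝ => k - a) 1 k := (hasDerivAt_id k).sub_const a
        have h2 := (h1.fun_inv hne').fun_neg
        convert! h2 using 1
        field_simp
      have hii : IntervalIntegrable (fun k => ((k-a)^2)⁻¹) volume 0 m := by
        apply ContinuousOn.intervalIntegrable
        rw [uIcc_of_le hm0]
        apply ContinuousOn.inv₀ (by fun_prop)
        intro k hk
        have : k - a ≠ 0 := sub_ne_zero.2 (hne k hk)
        positivity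
      rw [intervalIntegral.integral_eq_sub_of_hasDerivAt hd hii]
      have hma : m - a = -δ := by simp [hm]
      rw [hma]
      simp
    have hb : ‖∫ k in (0:ℝ)..m, E k‖
        ≤ |∫ k in (0:ℝ)..m, (δ/2 * (x * rexp (-(x*k))) + δ*δ/2 * ((k-a)^2)⁻¹)| := by
      apply intervalIntegral.norm_integral_le_abs_of_norm_le
      · rw [uIoc_of_le hm0, ae_restrict_iff' measurableSet_Ioc]
        filter_upwards with k hk
        exact norm_E_le t x a k δ ht hδpos hδ hk.1.le hx.le (hka' k hk.2)
      · apply IntervalIntegrable.add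
        · exact (Continuous.intervalIntegrable (by fun_prop) 0 m)
        · apply IntervalIntegrable.const_mul
          apply ContinuousOn.intervalIntegrable
          rw [uIcc_of_le hm0]
          apply ContinuousOn.inv₀ (by fun_prop)
          intro k hk
          have : k - a ≠ 0 := sub_ne_zero.2 (hne k hk)
          positivity
    have int2 : IntervalIntegrable (fun k => δ*δ/2 * ((k-a)^2)⁻¹) volume 0 m := by
      apply IntervalIntegrable.const_mul
      apply ContinuousOn.intervalIntegrable
      rw [uIcc_of_le hm0]
      apply ContinuousOn.inv₀ (by fun_prop)
      intro k hk
      have : k - a ≠ 0 := sub_ne_zero.2 (hne k hk)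
      positivity
    have int1 : IntervalIntegrable (fun k => δ/2 * (x * rexp (-(x*k)))) volume 0 m := by
      apply IntervalIntegrable.const_mul
      exact Continuous.intervalIntegrable (by fun_prop) 0 m
    have i1' : (∫ k in (0:ℝ)..m, δ/2 * (x * rexp (-(x*k)))) = δ/2 * (1 - rexp (-(x*m))) := by
      rw [intervalIntegral.integral_const_mul (δ/2), j1]
    have i2' : (∫ k in (0:ℝ)..m, δ*δ/2 * ((k-a)^2)⁻¹) = δ*δ/2 * (δ⁻¹ - a⁻¹) := by
      rw [intervalIntegral.integral_const_mul (δ*δ/2), j2]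
    have hval : (∫ k in (0:ℝ)..m, (δ/2 * (x * rexp (-(x*k))) + δ*δ/2 * ((k-a)^2)⁻¹))
        = δ/2 * (1 - rexp (-(x*m))) + δ*δ/2 * (δ⁻¹ - a⁻¹) := by
      rw [intervalIntegral.integral_add int1 int2, i1', i2']
    rw [hval] at hb
    refine hb.trans ?_
    have e1 : 0 < rexp (-(x*m)) := Real.exp_pos _
    have e2 : rexp (-(x*m)) ≤ 1 := Real.exp_le_one_iff.2 (by nlinarith)
    have e3 : 0 < a := lt_of_lt_of_le hδpos ha
    have e4 : a⁻¹ ≤ δ⁻¹ := by exact inv_anti₀ hδpos ha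
    have e5 : 0 < a⁻¹ := by positivity
    have e6 : δ*δ/2 * δ⁻¹ = δ/2 := by field_simp
    rw [abs_le]
    constructor <;> nlinarith [mul_le_mul_of_nonneg_left e4 (by positivity : (0:ℝ) ≤ δ*δ/2),
      mul_pos (mul_pos hδpos hδpos) e5]
  calc ‖∫ k in Ioc 0 m, f k‖ = ‖(∫ k in (0:ℝ)..m, (f k - E k)) + ∫ k in (0:ℝ)..m, E k‖ := by
        rw [hIoc, hsplit]
    _ ≤ ‖∫ k in (0:ℝ)..m, (f k - E k)‖ + ‖∫ k in (0:ℝ)..m, E k‖ := norm_add_le _ _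
    _ ≤ (‖Φ m‖ + ‖Φ 0‖) + δ :=
        add_le_add (by rw [hFTC]; exact norm_sub_le _ _) hEbound
    _ ≤ (δ/2 + δ/2) + δ :=
        add_le_add (add_le_add (hΦval m hm0 le_rfl) (hΦval 0 le_rfl hm0)) le_rfl
    _ = 2 * δ := by ring

lemma kernel_bound (t x a : ℝ) (ht : t ≠ 0) (hx : 0 < x) :
    ‖∫ k in Ioi (0:ℝ), Complex.exp (-(k:ℂ)*x + I*t*((k:ℂ)-a)^2)‖
      ≤ 6 * |t| ^ (-(1/2) : ℝ) := by
  have habs : (0:ℝ) < |t| := abs_pos.2 ht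
  set δ : ℝ := |t| ^ (-(1/2) : ℝ) with hδdef
  have hδpos : 0 < δ := Real.rpow_pos_of_pos habs _
  have hδ : δ * δ = |t|⁻¹ := by
    rw [hδdef, ← Real.rpow_add habs]
    norm_num
    exact (Real.rpow_neg_one _)
  set f : ℝ → ℂ := fun k => Complex.exp (-(k:ℂ)*x + I*t*((k:ℂ)-a)^2) with hf
  set m : ℝ := max 0 (a - δ) with hmdef
  set c : ℝ := max 0 (a + δ) with hcdef
  have hm0 : 0 ≤ m := le_max_left _ _
  have hc0 : 0 ≤ c := le_max_left _ _
  have hmc : m ≤ c := max_le_max le_rfl (by linarith)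
  have hca : δ ≤ c - a := by
    have := le_max_right (0:ℝ) (a + δ)
    rw [← hcdef] at this
    linarith
  have hcm2 : c ≤ m + 2*δ := by
    rcases le_total (a - δ) 0 with h|h
            
    · have hm' : m = 0 := max_eq_left h
      have h2 : a + δ ≤ 2*δ := by linarith
      have : c ≤ max 0 (2*δ) := max_le_max le_rfl h2
      rw [max_eq_right (by positivity : (0:ℝ) ≤ 2*δ)] at this
      linarith
    · have hm' : m = a - δ := max_eq_right h
      have hc' : c = a + δ := max_eq_right (by linarith)
      rw [hm', hc']; linarith
  have hfc : Continuous f := cont_f t x a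
  have hint1 : IntegrableOn f (Ioc 0 m) := hfc.integrableOn_Ioc
  have hint2 : IntegrableOn f (Ioc m c) := hfc.integrableOn_Ioc
  have hint3 : IntegrableOn f (Ioi c) := f_integrableOn t x a c hx
  have hsplit1 : (∫ k in Ioi (0:ℝ), f k)
      = (∫ k in Ioc 0 c, f k) + ∫ k in Ioi c, f k := by
    rw [← setIntegral_union (Ioc_disjoint_Ioi le_rfl) measurableSet_Ioi
      (hfc.integrableOn_Ioc) hint3, Ioc_union_Ioi_eq_Ioi hc0]
  have hsplit2 : (∫ k in Ioc (0:ℝ) c, f k)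
      = (∫ k in Ioc 0 m, f k) + ∫ k in Ioc m c, f k := by
    rw [← setIntegral_union (Ioc_disjoint_Ioc_of_le le_rfl) measurableSet_Ioc hint1 hint2,
      Ioc_union_Ioc_eq_Ioc hm0 hmc]
  -- middle bound
  have hmid : ‖∫ k in Ioc m c, f k‖ ≤ 2*δ := by
    have hb : ‖∫ k in Ioc m c, f k‖ ≤ 1 * (volume (Ioc m c)).toReal := by
      apply norm_setIntegral_le_of_norm_le_const
      · rw [Real.volume_Ioc]; exact ENNReal.ofReal_lt_top
      · intro k hk
        rw [hf]
        simp only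
        rw [norm_f]
        apply Real.exp_le_one_iff.2
        have : 0 < k := lt_of_le_of_lt hm0 hk.1
        nlinarith
    rw [Real.volume_Ioc, ENNReal.toReal_ofReal (by linarith)] at hb
    linarith
  -- left bound
  have hleft : ‖∫ k in Ioc 0 m, f k‖ ≤ 2*δ := by
    rcases le_or_gt δ a with h|h
    · have hm' : m = a - δ := max_eq_right (by linarith)
      rw [hm']
      exact left_bound t x a δ ht hx hδpos hδ h
    · have hm' : m = 0 := max_eq_left (by linarith)
      rw [hm']
      simp
      positivity
  have htail : ‖∫ k in Ioi c, f k‖ ≤ 3/2 * δ := tail_bound t x a c δ ht hx hδpos hδ hc0 hca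
  calc ‖∫ k in Ioi (0:ℝ), f k‖
      = ‖((∫ k in Ioc 0 m, f k) + ∫ k in Ioc m c, f k) + ∫ k in Ioi c, f k‖ := by
        rw [hsplit1, hsplit2]
    _ ≤ (‖∫ k in Ioc 0 m, f k‖ + ‖∫ k in Ioc m c, f k‖) + ‖∫ k in Ioi c, f k‖ :=
        le_trans (norm_add_le _ _) (by gcongr; exact norm_add_le _ _)
    _ ≤ (2*δ + 2*δ) + 3/2*δ := by gcongr
    _ ≤ 6 * δ := by linarith

lemma norm_exp1 (k x t : ℝ) : ‖Complex.exp (-(k:ℂ)*x + I*(k:ℂ)^2*t)‖ = rexp (-(k*x)) := by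
  have h : -(k:ℂ)*x + I*(k:ℂ)^2*t = ((-(k*x) : ℝ) : ℂ) + ((k^2*t : ℝ):ℂ) * I := by
    push_cast; ring
  rw [h, Complex.norm_exp]
  simp only [Complex.add_re, Complex.ofReal_re, Complex.mul_re, Complex.I_re, Complex.I_im,
    Complex.ofReal_im]
  ring_nf

lemma norm_exp2 (k τ : ℝ) : ‖Complex.exp (-(I*(k:ℂ)*τ))‖ = 1 := by
  have h : -(I*(k:ℂ)*τ) = ((-(k*τ) : ℝ):ℂ) * I := by push_cast; ring
  rw [h, Complex.norm_exp]
  simp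

lemma norm_exp3 (τ t : ℝ) : ‖Complex.exp (-(I*(τ:ℂ)^2/(4*t)))‖ = 1 := by
  have h : -(I*(τ:ℂ)^2/(4*t)) = ((-(τ^2/(4*t)) : ℝ):ℂ) * I := by push_cast; ring
  have h2 : ((((-(τ^2/(4*t)) : ℝ)):ℂ) * I).re = 0 := by
    simp only [Complex.mul_re, Complex.ofReal_re, Complex.ofReal_im, Complex.I_re, Complex.I_im]
    ring
  rw [h, Complex.norm_exp, h2, Real.exp_zero]

lemma fourierT_eq (h : ℝ → ℂ) (k : ℝ) : fourierT h k = FourierTransform.fourier h (k / (2*π)) := by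
  rw [Real.fourier_real_eq_integral_exp_smul]
  unfold fourierT
  congr 1
  ext τ
  rw [smul_eq_mul]
  congr 2
  have hπ : ((π:ℝ):ℂ) ≠ 0 := by exact_mod_cast Real.pi_ne_zero
  push_cast
  field_simp

lemma fourierT_integrable (H : SchwartzMap ℝ ℂ) :
    Integrable (fun k => fourierT (fun τ => H τ) k) := by
  have he : (fun k => fourierT (fun τ => H τ) k)
      = fun k => (SchwartzMap.fourierTransformCLM ℂ H) (k / (2*π)) := by
    ext k
    rw [fourierT_eq, SchwartzMap.fourierTransformCLM_apply]
    rfl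
  rw [he]
  exact (SchwartzMap.integrable _).comp_div (by positivity)

lemma fourierT_continuous (H : SchwartzMap ℝ ℂ) :
    Continuous (fun k => fourierT (fun τ => H τ) k) := by
  have he : (fun k => fourierT (fun τ => H τ) k)
      = fun k => (SchwartzMap.fourierTransformCLM ℂ H) (k / (2*π)) := by
    ext k
    rw [fourierT_eq, SchwartzMap.fourierTransformCLM_apply]
    rfl
  rw [he]
  exact (SchwartzMap.fourierTransformCLM ℂ H).continuous.comp (by fun_prop)

lemma uOne_repr (H : SchwartzMap ℝ ℂ) (x t : ℝ) (hx : 0 < x) :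
    uOne (fun τ => H τ) x t
      = ∫ τ : ℝ, (∫ k in Ioi (0:ℝ), Complex.exp (-(k:ℂ)*x + I*(k:ℂ)^2*t - I*k*τ)) * H τ := by
  have hintH : Integrable (fun τ => (H τ : ℂ)) := H.integrable
  have hmeas : AEStronglyMeasurable
      (Function.uncurry fun (k τ : ℝ) =>
        Complex.exp (-(k:ℂ)*x + I*(k:ℂ)^2*t) * (Complex.exp (-(I*(k:ℂ)*τ)) * H τ))
      ((volume.restrict (Ioi (0:ℝ))).prod volume) := by
    apply Continuous.aestronglyMeasurable
    exact Continuous.mul (by fun_prop)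
      (Continuous.mul (by fun_prop) (H.continuous.comp continuous_snd))
  have hginte : Integrable (fun p : ℝ × ℝ => rexp (-x * p.1) * ‖H p.2‖)
      ((volume.restrict (Ioi (0:ℝ))).prod volume) :=
    Integrable.mul_prod (exp_neg_integrableOn_Ioi 0 hx) hintH.norm
  have hintF : Integrable
      (Function.uncurry fun (k τ : ℝ) =>
        Complex.exp (-(k:ℂ)*x + I*(k:ℂ)^2*t) * (Complex.exp (-(I*(k:ℂ)*τ)) * H τ))
      ((volume.restrict (Ioi (0:ℝ))).prod volume) := by
    apply Integrable.mono' hginte hmeas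
    filter_upwards with p
    obtain ⟨k, τ⟩ := p
    rw [Function.uncurry_apply_pair]
    rw [norm_mul, norm_mul, norm_exp1, norm_exp2, one_mul]
    rw [show -(k*x) = -x*k by ring]
  have hswap := integral_integral_swap hintF
  have h1 : uOne (fun τ => H τ) x t
      = ∫ k in Ioi (0:ℝ), ∫ τ : ℝ,
          Complex.exp (-(k:ℂ)*x + I*(k:ℂ)^2*t) * (Complex.exp (-(I*(k:ℂ)*τ)) * H τ) := by
    unfold uOne fourierT
    congr 1
    ext k
    rw [integral_const_mul]
  rw [h1, hswap]
  congr 1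
  ext τ
  rw [← integral_mul_const]
  congr 1
  ext k
  rw [← mul_assoc, ← Complex.exp_add]
  ring_nf

lemma kernel_shift (t x τ : ℝ) (ht : t ≠ 0) (k : ℝ) :
    Complex.exp (-(k:ℂ)*x + I*(k:ℂ)^2*t - I*k*τ)
      = Complex.exp (-(I*(τ:ℂ)^2/(4*t)))
        * Complex.exp (-(k:ℂ)*x + I*t*((k:ℂ)-((τ/(2*t) : ℝ):ℂ))^2) := by
  rw [← Complex.exp_add]
  congr 1
  have htC : (t:ℂ) ≠ 0 := by exact_mod_cast ht
  push_cast
  field_simp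
  ring

lemma uOne_bound_pos (H : SchwartzMap ℝ ℂ) (t x : ℝ) (ht : t ≠ 0) (hx : 0 < x) :
    ‖uOne (fun τ => H τ) x t‖ ≤ 6 * |t| ^ (-(1/2) : ℝ) * ∫ τ : ℝ, ‖H τ‖ := by
  rw [uOne_repr H x t hx]
  have hbound : ∀ τ : ℝ,
      ‖(∫ k in Ioi (0:ℝ), Complex.exp (-(k:ℂ)*x + I*(k:ℂ)^2*t - I*k*τ)) * H τ‖
        ≤ 6 * |t| ^ (-(1/2) : ℝ) * ‖H τ‖ := by
    intro τ
    rw [norm_mul]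
    apply mul_le_mul_of_nonneg_right _ (norm_nonneg _)
    have he : (∫ k in Ioi (0:ℝ), Complex.exp (-(k:ℂ)*x + I*(k:ℂ)^2*t - I*k*τ))
        = Complex.exp (-(I*(τ:ℂ)^2/(4*t)))
          * ∫ k in Ioi (0:ℝ), Complex.exp (-(k:ℂ)*x + I*t*((k:ℂ)-((τ/(2*t):ℝ):ℂ))^2) := by
      rw [← integral_const_mul]
      congr 1
      ext k
      exact kernel_shift t x τ ht k
    rw [he, norm_mul, norm_exp3, one_mul]
    exact kernel_bound t x (τ/(2*t)) ht hx
  have hInt : Integrable (fun τ : ℝ => 6 * |t| ^ (-(1/2) : ℝ) * ‖H τ‖) :=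
    (H.integrable.norm).const_mul _
  calc ‖∫ τ : ℝ, (∫ k in Ioi (0:ℝ), Complex.exp (-(k:ℂ)*x + I*(k:ℂ)^2*t - I*k*τ)) * H τ‖
      ≤ ∫ τ : ℝ, 6 * |t| ^ (-(1/2) : ℝ) * ‖H τ‖ :=
        norm_integral_le_of_norm_le hInt (Filter.Eventually.of_forall hbound)
    _ = 6 * |t| ^ (-(1/2) : ℝ) * ∫ τ : ℝ, ‖H τ‖ := integral_const_mul _ _

/-- The `L¹ → L^∞` dispersive estimate: for Schwartz `H₁` whose Fourier transform vanishes
on `(−∞,0)`, one has `sup_{x ≥ 0} |u₁(x,t)| ≤ c |t|^{−1/2} ‖H₁‖_{L¹(ℝ)}` for `t ≠ 0`. -/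
theorem uOne_dispersive_estimate :
    ∃ c : ℝ, 0 < c ∧ ∀ H₁ : SchwartzMap ℝ ℂ,
      (∀ k : ℝ, k < 0 → fourierT (fun τ => H₁ τ) k = 0) →
      ∀ t : ℝ, t ≠ 0 → ∀ x : ℝ, 0 ≤ x →
        ‖uOne (fun τ => H₁ τ) x t‖ ≤ c * |t| ^ (-(1 / 2) : ℝ) * ∫ τ : ℝ, ‖H₁ τ‖ := by
  refine ⟨6, by norm_num, fun H _ t ht x hx => ?_⟩
  rcases hx.eq_or_lt with h|h
  · -- x = 0 : limit of x = 1/(n+1)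
    subst h
    have hpos : ∀ n : ℕ, (0:ℝ) < 1/(n+1) := fun n => by positivity
    have htends : Tendsto (fun n : ℕ => uOne (fun τ => H τ) (1/(n+1)) t) atTop
        (𝓝 (uOne (fun τ => H τ) 0 t)) := by
      unfold uOne
      apply tendsto_integral_of_dominated_convergence
        (bound := fun k => ‖fourierT (fun τ => H τ) k‖)
      · intro n
        exact ((Complex.continuous_exp.comp (by fun_prop)).mul
          (fourierT_continuous H)).aestronglyMeasurable.restrict
      · exact ((fourierT_integrable H).norm).restrict
      · intro n
        rw [ae_restrict_iff' measurableSet_Ioi]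
        filter_upwards with k hk
        rw [norm_mul]
        have he : ‖Complex.exp (-(k:ℂ)*((1/(n+1):ℝ):ℂ) + I*(k:ℂ)^2*t)‖
            = rexp (-(k * (1/(n+1)))) := norm_exp1 k (1/(n+1)) t
        calc ‖Complex.exp (-(k:ℂ)*((1/(n+1):ℝ):ℂ) + I*(k:ℂ)^2*t)‖ * ‖fourierT (fun τ => H τ) k‖
            ≤ 1 * ‖fourierT (fun τ => H τ) k‖ := by
              apply mul_le_mul_of_nonneg_right _ (norm_nonneg _)
              rw [he]
              apply Real.exp_le_one_iff.2
              have := hpos n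
              have hk' : 0 < k := hk
              nlinarith
          _ = ‖fourierT (fun τ => H τ) k‖ := one_mul _
      · rw [ae_restrict_iff' measurableSet_Ioi]
        filter_upwards with k _
        have hx0 : Tendsto (fun n : ℕ => (1/(n+1) : ℝ)) atTop (𝓝 0) :=
          tendsto_one_div_add_atTop_nhds_zero_nat
        have hx0C : Tendsto (fun n : ℕ => ((1/(n+1) : ℝ) : ℂ)) atTop (𝓝 ((0:ℝ):ℂ)) :=
          (Complex.continuous_ofReal.tendsto 0).comp hx0
        have harg : Tendsto (fun n : ℕ => -(k:ℂ)*((1/(n+1):ℝ):ℂ) + I*(k:ℂ)^2*t) atTop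
            (𝓝 (-(k:ℂ)*((0:ℝ):ℂ) + I*(k:ℂ)^2*t)) :=
          ((hx0C.const_mul (-(k:ℂ))).add tendsto_const_nhds)
        exact ((Complex.continuous_exp.continuousAt.tendsto.comp harg).mul_const _)
    have hb : ∀ n : ℕ, ‖uOne (fun τ => H τ) (1/(n+1)) t‖
        ≤ 6 * |t| ^ (-(1/2) : ℝ) * ∫ τ : ℝ, ‖H τ‖ :=
      fun n => uOne_bound_pos H t _ ht (hpos n)
    exact le_of_tendsto htends.norm (Eventually.of_forall hb)
  · exact uOne_bound_pos H t x ht h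
end
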